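/- Let V be a complex Banach space, let μ : ℝ → ℂ be bounded, continuous and almost automorphic such that t ↦ Re(μ(t)) is ergodic with mean M(Re μ) ≠ 0, and let f : ℝ → V be bounded, continuous and almost automorphic. If M(Re μ) < 0, then y(t) = ∫_{−∞}^t exp(∫_s^t μ(r) dr)·f(s) ds is the unique bounded differentiable solution of y'(t) = μ(t)·y(t) + f(t) on ℝ, and y is almost automorphic. If M(Re μ) > 0, then y(t) = −∫_t^{∞} exp(∫_s^t μ(r) dr)·f(s) ds is the unique bounded differentiable solution, and it is almost automorphic. -/

import Mathlib

open MeasureTheory Filter Topology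

/-- A continuous function `ψ : ℝ → V` into a Banach space is almost automorphic if for every
sequence of reals there is a subsequence `(τₙ)` and a function `ψ̃` with
`ψ(t+τₙ) → ψ̃(t)` and `ψ̃(t−τₙ) → ψ(t)` pointwise on `ℝ`. -/
def AlmostAutomorphic {V : Type*} [NormedAddCommGroup V] (ψ : ℝ → V) : Prop :=
  Continuous ψ ∧ ∀ σ : ℕ → ℝ, ∃ k : ℕ → ℕ, StrictMono k ∧ ∃ ψt : ℝ → V,
    (∀ t : ℝ, Tendsto (fun n => ψ (t + σ (k n))) atTop (𝓝 (ψt t))) ∧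
    (∀ t : ℝ, Tendsto (fun n => ψt (t - σ (k n))) atTop (𝓝 (ψ t)))

/-- A bounded continuous function `f : ℝ → ℝ` is ergodic with mean `M` if
`(1/(2T)) ∫_{−T+ξ}^{T+ξ} f(s) ds → M` as `T → ∞`, uniformly with respect to `ξ ∈ ℝ`. -/
def ErgodicMeanR (f : ℝ → ℝ) (M : ℝ) : Prop :=
  ∀ ε > 0, ∃ T₁ > (0 : ℝ), ∀ T ≥ T₁, ∀ ξ : ℝ,
    |(2 * T)⁻¹ * (∫ s in (-T + ξ)..(T + ξ), f s) - M| < ε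

namespace MasseraAux

open Set intervalIntegral

lemma exp_decay_intervalIntegral (γ t a : ℝ) (hγ : 0 < γ) :
    ∫ s in a..t, Real.exp (γ * (s - t)) = γ⁻¹ * (1 - Real.exp (γ * (a - t))) := by
  rw [show (fun s => Real.exp (γ * (s - t))) = (fun s => (fun u => Real.exp (γ * u)) (s - t)) from rfl,
    intervalIntegral.integral_comp_sub_right (fun u => Real.exp (γ * u)) t,
    intervalIntegral.integral_comp_mul_left Real.exp (ne_of_gt hγ), integral_exp]
  rw [smul_eq_mul]
  rw [show γ * (t - t) = 0 by ring, Real.exp_zero]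

lemma integrableOn_exp_decay (γ t : ℝ) (hγ : 0 < γ) :
    IntegrableOn (fun s => Real.exp (γ * (s - t))) (Iic t) := by
  refine integrableOn_Iic_of_intervalIntegral_norm_bounded (γ⁻¹) t (a := fun n : ℕ => t - n)
    (l := atTop) (fun i => ((Real.continuous_exp.comp (by continuity)).integrableOn_Ioc)) ?_ ?_
  · exact tendsto_atBot_add_const_left _ t (tendsto_neg_atBot_iff.mpr tendsto_natCast_atTop_atTop)
  · filter_upwards with n
    have : ∀ s : ℝ, ‖Real.exp (γ * (s - t))‖ = Real.exp (γ * (s - t)) := fun s => Real.norm_of_nonneg (Real.exp_pos _).le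
    simp_rw [this]
    rw [exp_decay_intervalIntegral γ t _ hγ]
    have := (Real.exp_pos (γ * (t - ↑n - t))).le
    nlinarith [inv_pos.mpr hγ]

lemma integral_exp_decay (γ t : ℝ) (hγ : 0 < γ) :
    ∫ s in Iic t, Real.exp (γ * (s - t)) = γ⁻¹ := by
  have := integral_Iic_of_hasDerivAt_of_tendsto' (f := fun s => γ⁻¹ * Real.exp (γ * (s - t)))
    (f' := fun s => Real.exp (γ * (s - t))) (a := t) (m := 0) ?_ (integrableOn_exp_decay γ t hγ) ?_
  · rw [this]; simp
  · intro x _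
    have : HasDerivAt (fun s => γ * (s - t)) γ x := by
      simpa using ((hasDerivAt_id x).sub_const t).const_mul γ
    have h2 := (Real.hasDerivAt_exp (γ * (x - t))).comp x this
    have h3 := h2.const_mul γ⁻¹
    convert h3 using 1
    · rfl
    · rfl
    field_simp
  · rw [show (0:ℝ) = γ⁻¹ * 0 by ring]
    refine (Real.tendsto_exp_atBot.comp ?_).const_mul _
    exact (tendsto_atBot_add_const_right _ (-(γ*t)) (tendsto_id.const_mul_atBot hγ)).congr (by intro x; simp; ring)

lemma decay_of_ergodic {μ : ℝ → ℂ} {C m : ℝ} (hμb : ∀ t, ‖μ t‖ ≤ C)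
    (hm : ErgodicMeanR (fun t => (μ t).re) m) (hm0 : m < 0) :
    ∃ K γ : ℝ, 0 ≤ K ∧ 0 < γ ∧ ∀ s t : ℝ, s ≤ t →
      (∫ r in s..t, (μ r).re) ≤ K - γ * (t - s) := by
  obtain ⟨T₁, hT₁, hT⟩ := hm (-m/2) (by linarith)
  have hC0 : 0 ≤ C := le_trans (norm_nonneg (μ 0)) (hμb 0)
  refine ⟨(C + (-m/2)) * (2 * T₁), -m/2, by nlinarith, by linarith, ?_⟩
  intro s t hst
  have hre : ∀ r, |(μ r).re| ≤ C := fun r => le_trans (Complex.abs_re_le_norm _) (hμb r)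
  by_cases hcase : 2 * T₁ ≤ t - s
  · have hTpos : T₁ ≤ (t - s) / 2 := by linarith
    have := hT ((t - s) / 2) hTpos ((s + t) / 2)
    rw [show -((t - s) / 2) + (s + t) / 2 = s by ring,
        show (t - s) / 2 + (s + t) / 2 = t by ring] at this
    have habs := abs_lt.mp this
    have h2 : (2 * ((t - s) / 2))⁻¹ * (∫ r in s..t, (μ r).re) < m + -m/2 := by linarith [habs.2]
    have hts : (0:ℝ) < t - s := by linarith
    rw [show 2 * ((t - s) / 2) = t - s by ring] at h2
    have := (inv_mul_lt_iff₀ hts).mp h2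
    nlinarith
  · have hb := intervalIntegral.norm_integral_le_of_norm_le_const
      (f := fun r => (μ r).re) (C := C) (a := s) (b := t) (fun r _ => by
        simpa [Real.norm_eq_abs] using hre r)
    rw [abs_of_nonneg (by linarith)] at hb
    have h1 : (∫ r in s..t, (μ r).re) ≤ C * (t - s) :=
      le_trans (le_abs_self _) (by simpa [Real.norm_eq_abs] using hb)
    nlinarith [hre 0]

lemma intervalIntegrable_of_bdd {E : Type*} [NormedAddCommGroup E] {ν : ℝ → E} {C : ℝ}
    (hm : AEStronglyMeasurable ν volume) (hb : ∀ t, ‖ν t‖ ≤ C) (a b : ℝ) :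
    IntervalIntegrable ν volume a b := by
  constructor <;>
  exact Integrable.mono' ((integrableOn_const (C := C) measure_Ioc_lt_top.ne))
    hm.restrict (ae_of_all _ hb)

lemma kernel_continuous {ν : ℝ → ℂ} (hνi : ∀ a b : ℝ, IntervalIntegrable ν volume a b) (t : ℝ) :
    Continuous (fun s => Complex.exp (∫ r in s..t, ν r)) := by
  have hprim : Continuous (fun s => ∫ r in (0:ℝ)..s, ν r) :=
    intervalIntegral.continuous_primitive hνi 0
  have : ∀ s : ℝ, (∫ r in s..t, ν r) = (∫ r in (0:ℝ)..t, ν r) - ∫ r in (0:ℝ)..s, ν r :=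
    fun s => (intervalIntegral.integral_interval_sub_left (hνi 0 t) (hνi 0 s)).symm
  have h2 : Continuous fun s => Complex.exp ((∫ r in (0:ℝ)..t, ν r) - ∫ r in (0:ℝ)..s, ν r) :=
    Complex.continuous_exp.comp (continuous_const.sub hprim)
  exact h2.congr fun s => by rw [this s]

lemma re_intervalIntegral {ν : ℝ → ℂ} (hνi : ∀ a b : ℝ, IntervalIntegrable ν volume a b)
    (s t : ℝ) : (∫ r in s..t, ν r).re = ∫ r in s..t, (ν r).re := by
  have := (Complex.reCLM.intervalIntegral_comp_comm (hνi s t) (a := s) (b := t)).symm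
  simpa using this

lemma norm_exp_kernel_le {ν : ℝ → ℂ} {K γ : ℝ}
    (hνi : ∀ a b : ℝ, IntervalIntegrable ν volume a b)
    (hdec : ∀ s t : ℝ, s ≤ t → (∫ r in s..t, (ν r).re) ≤ K - γ * (t - s))
    {s t : ℝ} (hst : s ≤ t) :
    ‖Complex.exp (∫ r in s..t, ν r)‖ ≤ Real.exp (K - γ * (t - s)) := by
  rw [Complex.norm_exp, re_intervalIntegral hνi]
  exact Real.exp_le_exp.2 (hdec s t hst)

section
variable {V : Type*} [NormedAddCommGroup V] [NormedSpace ℂ V]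

lemma integrableOn_kernel {ν : ℝ → ℂ} {g : ℝ → V} {K γ Cg : ℝ} (hγ : 0 < γ)
    (hνi : ∀ a b : ℝ, IntervalIntegrable ν volume a b)
    (hdec : ∀ s t : ℝ, s ≤ t → (∫ r in s..t, (ν r).re) ≤ K - γ * (t - s))
    (hgm : AEStronglyMeasurable g volume) (hgb : ∀ s, ‖g s‖ ≤ Cg) (t : ℝ) :
    IntegrableOn (fun s => Complex.exp (∫ r in s..t, ν r) • g s) (Iic t) := by
  refine Integrable.mono' (g := fun s => (Real.exp K * Cg) * Real.exp (γ * (s - t)))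
    (((integrableOn_exp_decay γ t hγ).const_mul _)) ?_ ?_
  · exact (((kernel_continuous hνi t).aestronglyMeasurable).smul hgm).restrict
  · refine (ae_restrict_mem measurableSet_Iic).mono fun s hs => ?_
    have h1 := norm_exp_kernel_le hνi hdec (hs : s ≤ t)
    have hCg : 0 ≤ Cg := le_trans (norm_nonneg _) (hgb s)
    calc ‖Complex.exp (∫ r in s..t, ν r) • g s‖
        = ‖Complex.exp (∫ r in s..t, ν r)‖ * ‖g s‖ := norm_smul _ _
      _ ≤ Real.exp (K - γ * (t - s)) * Cg := by
          exact mul_le_mul h1 (hgb s) (norm_nonneg _) (Real.exp_pos _).le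
      _ = (Real.exp K * Cg) * Real.exp (γ * (s - t)) := by
          rw [show K - γ * (t - s) = K + γ * (s - t) by ring, Real.exp_add]; ring

lemma norm_integral_kernel_le {ν : ℝ → ℂ} {g : ℝ → V} {K γ Cg : ℝ} (hγ : 0 < γ)
    (hνi : ∀ a b : ℝ, IntervalIntegrable ν volume a b)
    (hdec : ∀ s t : ℝ, s ≤ t → (∫ r in s..t, (ν r).re) ≤ K - γ * (t - s))
    (hgb : ∀ s, ‖g s‖ ≤ Cg) (t : ℝ) :
    ‖∫ s in Iic t, Complex.exp (∫ r in s..t, ν r) • g s‖ ≤ (Real.exp K * Cg) * γ⁻¹ := by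
  have hb : ∀ᵐ s ∂(volume.restrict (Iic t)),
      ‖Complex.exp (∫ r in s..t, ν r) • g s‖ ≤ (Real.exp K * Cg) * Real.exp (γ * (s - t)) := by
    refine (ae_restrict_mem measurableSet_Iic).mono fun s hs => ?_
    have h1 := norm_exp_kernel_le hνi hdec (hs : s ≤ t)
    calc ‖Complex.exp (∫ r in s..t, ν r) • g s‖
        = ‖Complex.exp (∫ r in s..t, ν r)‖ * ‖g s‖ := norm_smul _ _
      _ ≤ Real.exp (K - γ * (t - s)) * Cg :=
          mul_le_mul h1 (hgb s) (norm_nonneg _) (Real.exp_pos _).le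
      _ = (Real.exp K * Cg) * Real.exp (γ * (s - t)) := by
          rw [show K - γ * (t - s) = K + γ * (s - t) by ring, Real.exp_add]; ring
  calc ‖∫ s in Iic t, Complex.exp (∫ r in s..t, ν r) • g s‖
      ≤ ∫ s in Iic t, (Real.exp K * Cg) * Real.exp (γ * (s - t)) :=
        norm_integral_le_of_norm_le ((integrableOn_exp_decay γ t hγ).const_mul _) hb
    _ = (Real.exp K * Cg) * γ⁻¹ := by
        rw [MeasureTheory.integral_const_mul, integral_exp_decay γ t hγ]

lemma tendsto_kernel_integral [CompleteSpace V]
    {ν : ℕ → ℝ → ℂ} {ν' : ℝ → ℂ} {g : ℕ → ℝ → V} {g' : ℝ → V} {K γ Cν Cg : ℝ} (hγ : 0 < γ)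
    (hνi : ∀ n, ∀ a b : ℝ, IntervalIntegrable (ν n) volume a b)
    (hνb : ∀ n r, ‖ν n r‖ ≤ Cν)
    (hdec : ∀ n, ∀ s t : ℝ, s ≤ t → (∫ r in s..t, ((ν n) r).re) ≤ K - γ * (t - s))
    (hgm : ∀ n, AEStronglyMeasurable (g n) volume) (hgb : ∀ n s, ‖g n s‖ ≤ Cg)
    (hptν : ∀ r, Tendsto (fun n => ν n r) atTop (𝓝 (ν' r)))
    (hptg : ∀ s, Tendsto (fun n => g n s) atTop (𝓝 (g' s))) (t : ℝ) :
    Tendsto (fun n => ∫ s in Iic t, Complex.exp (∫ r in s..t, ν n r) • g n s) atTop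
      (𝓝 (∫ s in Iic t, Complex.exp (∫ r in s..t, ν' r) • g' s)) := by
  refine tendsto_integral_of_dominated_convergence
    (fun s => (Real.exp K * Cg) * Real.exp (γ * (s - t))) ?_ ?_ ?_ ?_
  · exact fun n => (((kernel_continuous (hνi n) t).aestronglyMeasurable).smul (hgm n)).restrict
  · exact (integrableOn_exp_decay γ t hγ).const_mul _
  · intro n
    refine (ae_restrict_mem measurableSet_Iic).mono fun s hs => ?_
    have h1 := norm_exp_kernel_le (hνi n) (hdec n) (hs : s ≤ t)
    calc ‖Complex.exp (∫ r in s..t, ν n r) • g n s‖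
        = ‖Complex.exp (∫ r in s..t, ν n r)‖ * ‖g n s‖ := norm_smul _ _
      _ ≤ Real.exp (K - γ * (t - s)) * Cg :=
          mul_le_mul h1 (hgb n s) (norm_nonneg _) (Real.exp_pos _).le
      _ = (Real.exp K * Cg) * Real.exp (γ * (s - t)) := by
          rw [show K - γ * (t - s) = K + γ * (s - t) by ring, Real.exp_add]; ring
  · refine ae_of_all _ fun s => ?_
    have hI : Tendsto (fun n => ∫ r in s..t, ν n r) atTop (𝓝 (∫ r in s..t, ν' r)) := by
      refine intervalIntegral.tendsto_integral_filter_of_dominated_convergence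
        (fun _ => Cν) ?_ ?_ ?_ ?_
      · exact Eventually.of_forall fun n => (hνi n s t).def'.aestronglyMeasurable
      · exact Eventually.of_forall fun n => ae_of_all _ fun r _ => hνb n r
      · exact intervalIntegrable_const
      · exact ae_of_all _ fun r _ => hptν r
    exact ((Complex.continuous_exp.continuousAt.tendsto.comp hI)).smul (hptg s)
end

lemma integral_Iic_shift {V : Type*} [NormedAddCommGroup V] [NormedSpace ℝ V]
    (h : ℝ → V) (t τ : ℝ) :
    ∫ s in Iic t, h (s + τ) = ∫ s in Iic (t + τ), h s := by
  have hpre : (fun x : ℝ => x + τ) ⁻¹' (Iic (t + τ)) = Iic t := by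
    ext x; simp
  have := (measurePreserving_add_right volume τ).setIntegral_preimage_emb
    (MeasurableEquiv.addRight τ).measurableEmbedding h (Iic (t + τ))
  rw [hpre] at this
  exact this

section
variable {V : Type*} [NormedAddCommGroup V] [NormedSpace ℂ V] [CompleteSpace V]

lemma massera_hasDerivAt (μ : ℝ → ℂ) (hμc : Continuous μ)
    {K γ : ℝ} (hγ : 0 < γ)
    (hdec : ∀ s t : ℝ, s ≤ t → (∫ r in s..t, (μ r).re) ≤ K - γ * (t - s))
    (f : ℝ → V) (hfc : Continuous f) {Cf : ℝ} (hfb : ∀ t, ‖f t‖ ≤ Cf) (t : ℝ) :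
    HasDerivAt (fun t => ∫ s in Set.Iic t, Complex.exp (∫ r in s..t, μ r) • f s)
      (μ t • (∫ s in Set.Iic t, Complex.exp (∫ r in s..t, μ r) • f s) + f t) t := by
  have hμi : ∀ a b : ℝ, IntervalIntegrable μ volume a b :=
    fun a b => hμc.intervalIntegrable a b
  set F : ℝ → ℂ := fun u => ∫ r in (0:ℝ)..u, μ r with hFdef
  have hFsub : ∀ s u : ℝ, (∫ r in s..u, μ r) = F u - F s :=
    fun s u => (intervalIntegral.integral_interval_sub_left (hμi 0 u) (hμi 0 s)).symm
  have hFc : Continuous F := intervalIntegral.continuous_primitive hμi 0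
  have hF : ∀ u, HasDerivAt F (μ u) u := fun u =>
    intervalIntegral.integral_hasDerivAt_right (hμi 0 u)
      (hμc.stronglyMeasurableAtFilter _ _) hμc.continuousAt
  set h : ℝ → V := fun s => Complex.exp (-F s) • f s with hhdef
  have hhc : Continuous h := (Complex.continuous_exp.comp hFc.neg).smul hfc
  have hint : ∀ u : ℝ, IntegrableOn
      (fun s => Complex.exp (∫ r in s..u, μ r) • f s) (Iic u) := fun u =>
    integrableOn_kernel hγ hμi hdec hfc.aestronglyMeasurable hfb u
  have hinth : ∀ u : ℝ, IntegrableOn h (Iic u) := by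
    intro u
    have : h = fun s => Complex.exp (-F u) • (Complex.exp (∫ r in s..u, μ r) • f s) := by
      funext s
      rw [hFsub, smul_smul, ← Complex.exp_add]
      ring_nf
      rfl
    rw [this]
    exact (hint u).smul _
  set g : ℝ → V := fun u => ∫ s in Iic u, h s with hgdef
  have hy : ∀ u : ℝ, (∫ s in Set.Iic u, Complex.exp (∫ r in s..u, μ r) • f s)
      = Complex.exp (F u) • g u := by
    intro u
    rw [hgdef, ← MeasureTheory.integral_smul]
    refine setIntegral_congr_fun measurableSet_Iic fun s _ => ?_
    rw [hFsub, smul_smul, ← Complex.exp_add]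
    ring_nf
  have hgderiv : HasDerivAt g (h t) t := by
    have heq : g = fun u => g t + ∫ s in t..u, h s := by
      funext u
      rw [← integral_Iic_sub_Iic (hinth t) (hinth u)]
      abel
    rw [heq]
    have : HasDerivAt (fun u => ∫ s in t..u, h s) (h t) t :=
      intervalIntegral.integral_hasDerivAt_right (hhc.intervalIntegrable t t)
        (hhc.stronglyMeasurableAtFilter _ _) hhc.continuousAt
    simpa using this.const_add (g t)
  have hexp : HasDerivAt (fun u => Complex.exp (F u)) (Complex.exp (F t) * μ t) t :=
    (Complex.hasDerivAt_exp (F t)).comp t (hF t)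
  have hmain : HasDerivAt (fun u => Complex.exp (F u) • g u)
      (Complex.exp (F t) • h t + (Complex.exp (F t) * μ t) • g t) t := hexp.smul hgderiv
  have : HasDerivAt (fun u => ∫ s in Set.Iic u, Complex.exp (∫ r in s..u, μ r) • f s)
      (Complex.exp (F t) • h t + (Complex.exp (F t) * μ t) • g t) t := by
    refine hmain.congr_of_eventuallyEq (Eventually.of_forall fun u => hy u)
  convert this using 1
  rw [hy t, hhdef]
  show (μ t) • (Complex.exp (F t) • g t) + f t
    = Complex.exp (F t) • (Complex.exp (-F t) • f t) + (Complex.exp (F t) * μ t) • g t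
  rw [smul_smul, smul_smul, ← Complex.exp_add, add_neg_cancel, Complex.exp_zero, one_smul,
    mul_comm (Complex.exp (F t)) (μ t)]
  abel

lemma massera_unique (μ : ℝ → ℂ) (hμc : Continuous μ)
    {K γ : ℝ} (hγ : 0 < γ)
    (hdec : ∀ s t : ℝ, s ≤ t → (∫ r in s..t, (μ r).re) ≤ K - γ * (t - s))
    (f : ℝ → V) (z₁ z₂ : ℝ → V)
    (h1 : ∀ t, HasDerivAt z₁ (μ t • z₁ t + f t) t)
    (h2 : ∀ t, HasDerivAt z₂ (μ t • z₂ t + f t) t)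
    (hb1 : ∃ C, ∀ t, ‖z₁ t‖ ≤ C) (hb2 : ∃ C, ∀ t, ‖z₂ t‖ ≤ C) : z₁ = z₂ := by
  obtain ⟨C₁, hC₁⟩ := hb1
  obtain ⟨C₂, hC₂⟩ := hb2
  have hμi : ∀ a b : ℝ, IntervalIntegrable μ volume a b :=
    fun a b => hμc.intervalIntegrable a b
  set F : ℝ → ℂ := fun u => ∫ r in (0:ℝ)..u, μ r with hFdef
  have hFsub : ∀ s u : ℝ, (∫ r in s..u, μ r) = F u - F s :=
    fun s u => (intervalIntegral.integral_interval_sub_left (hμi 0 u) (hμi 0 s)).symm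
  have hF : ∀ u, HasDerivAt F (μ u) u := fun u =>
    intervalIntegral.integral_hasDerivAt_right (hμi 0 u)
      (hμc.stronglyMeasurableAtFilter _ _) hμc.continuousAt
  set w : ℝ → V := fun u => z₁ u - z₂ u with hwdef
  have hw : ∀ u, HasDerivAt w (μ u • w u) u := by
    intro u
    have := (h1 u).sub (h2 u)
    convert this using 1
    · rfl
    rw [hwdef]
    simp [smul_sub]
  have hE : ∀ u, HasDerivAt (fun v => Complex.exp (-F v))
      (Complex.exp (-F u) * (-μ u)) u := fun u =>
    (Complex.hasDerivAt_exp (-F u)).comp u (hF u).neg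
  have hcst : ∀ u, HasDerivAt (fun v => Complex.exp (-F v) • w v) 0 u := by
    intro u
    have := (hE u).smul (hw u)
    convert this using 1
    · rfl
    rw [smul_smul, ← add_smul, show Complex.exp (-F u) * μ u
      + Complex.exp (-F u) * (-μ u) = 0 by ring, zero_smul]
  have hconst : ∀ a b : ℝ, Complex.exp (-F a) • w a = Complex.exp (-F b) • w b :=
    fun a b => is_const_of_deriv_eq_zero (𝕜 := ℝ)
      (fun u => (hcst u).differentiableAt) (fun u => (hcst u).deriv) a b
  have key : ∀ t : ℝ, w t = 0 := by
    intro t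
    have hwle : ∀ n : ℕ, ‖w t‖ ≤ Real.exp (K - γ * n) * (C₁ + C₂) := by
      intro n
      have hst : t - (n : ℝ) ≤ t := by
        simp
      have hwt : w t = Complex.exp (F t - F (t - n)) • w (t - n) := by
        have h0 := hconst t (t - n)
        calc w t = Complex.exp (F t) • (Complex.exp (-F t) • w t) := by
              rw [smul_smul, ← Complex.exp_add, add_neg_cancel, Complex.exp_zero, one_smul]
          _ = Complex.exp (F t) • (Complex.exp (-F (t - n)) • w (t - n)) := by rw [h0]
          _ = Complex.exp (F t - F (t - n)) • w (t - n) := by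
              rw [smul_smul, ← Complex.exp_add]; ring_nf
      rw [hwt, norm_smul]
      have hre : (F t - F (t - (n:ℝ))).re ≤ K - γ * n := by
        rw [← hFsub, re_intervalIntegral hμi]
        have := hdec (t - n) t hst
        simpa using this
      have hnorm : ‖Complex.exp (F t - F (t - (n:ℝ)))‖ ≤ Real.exp (K - γ * n) := by
        rw [Complex.norm_exp]
        exact Real.exp_le_exp.2 hre
      have hwn : ‖w (t - (n:ℝ))‖ ≤ C₁ + C₂ := by
        rw [hwdef]
        exact le_trans (norm_sub_le _ _) (add_le_add (hC₁ _) (hC₂ _))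
      exact mul_le_mul hnorm hwn (norm_nonneg _) (Real.exp_pos _).le
    have htend : Tendsto (fun n : ℕ => Real.exp (K - γ * n) * (C₁ + C₂)) atTop (𝓝 0) := by
      rw [show (0:ℝ) = 0 * (C₁ + C₂) by ring]
      refine Tendsto.mul_const _ ?_
      refine Real.tendsto_exp_atBot.comp ?_
      refine tendsto_atBot_add_const_left _ K ?_
      refine tendsto_neg_atTop_atBot.comp ?_
      exact Tendsto.const_mul_atTop hγ tendsto_natCast_atTop_atTop
    have : ‖w t‖ ≤ 0 := ge_of_tendsto' htend hwle
    simpa using norm_le_zero_iff.mp this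
  funext t
  have := key t
  rw [hwdef] at this
  exact sub_eq_zero.mp this

lemma massera_aa (μ : ℝ → ℂ) (hμc : Continuous μ) {C K γ Cf : ℝ} (hμb : ∀ t, ‖μ t‖ ≤ C)
    (hμaa : AlmostAutomorphic μ) (hγ : 0 < γ)
    (hdec : ∀ s t : ℝ, s ≤ t → (∫ r in s..t, (μ r).re) ≤ K - γ * (t - s))
    (f : ℝ → V) (hfc : Continuous f) (hfb : ∀ t, ‖f t‖ ≤ Cf) (hfaa : AlmostAutomorphic f)
    (hycont : Continuous (fun t => ∫ s in Set.Iic t, Complex.exp (∫ r in s..t, μ r) • f s)) :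
    AlmostAutomorphic (fun t => ∫ s in Set.Iic t, Complex.exp (∫ r in s..t, μ r) • f s) := by
  refine ⟨hycont, fun σ => ?_⟩
  obtain ⟨k₁, hk₁, μt, hμ1, hμ2⟩ := hμaa.2 σ
  obtain ⟨k₂, hk₂, ft, hf1, hf2⟩ := hfaa.2 (σ ∘ k₁)
  refine ⟨k₁ ∘ k₂, hk₁.comp hk₂, ?_⟩
  set τ : ℕ → ℝ := fun n => σ (k₁ (k₂ n)) with hτdef
  have hμ1' : ∀ r : ℝ, Tendsto (fun n => μ (r + τ n)) atTop (𝓝 (μt r)) :=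
    fun r => (hμ1 r).comp hk₂.tendsto_atTop
  have hμ2' : ∀ r : ℝ, Tendsto (fun n => μt (r - τ n)) atTop (𝓝 (μ r)) :=
    fun r => (hμ2 r).comp hk₂.tendsto_atTop
  have hμtm : AEStronglyMeasurable μt volume := by
    refine aestronglyMeasurable_of_tendsto_ae (u := atTop)
      (f := fun n (x : ℝ) => μ (x + σ (k₁ n))) ?_ (ae_of_all _ hμ1)
    exact fun n => (hμc.comp (continuous_id.add continuous_const)).aestronglyMeasurable
  have hμtb : ∀ r, ‖μt r‖ ≤ C := fun r =>
    le_of_tendsto (hμ1 r).norm (Eventually.of_forall fun n => hμb _)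
  have hμsi : ∀ c : ℝ, ∀ a b : ℝ, IntervalIntegrable (fun r => μ (r + c)) volume a b :=
    fun c a b => (hμc.comp (continuous_id.add continuous_const)).intervalIntegrable a b
  have hμtsi : ∀ c : ℝ, ∀ a b : ℝ, IntervalIntegrable (fun r => μt (r + c)) volume a b := by
    intro c
    refine intervalIntegrable_of_bdd ?_ (fun r => hμtb (r + c))
    exact hμtm.comp_quasiMeasurePreserving
      (measurePreserving_add_right volume c).quasiMeasurePreserving
  have hdecs : ∀ c : ℝ, ∀ s t : ℝ, s ≤ t →
      (∫ r in s..t, (μ (r + c)).re) ≤ K - γ * (t - s) := by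
    intro c s t hst
    have : (∫ r in s..t, (μ (r + c)).re) = ∫ r in s + c..t + c, (μ r).re :=
      intervalIntegral.integral_comp_add_right (fun r => (μ r).re) c
    rw [this]
    have := hdec (s + c) (t + c) (by linarith)
    convert this using 2
    ring
  have hdect : ∀ s t : ℝ, s ≤ t → (∫ r in s..t, (μt r).re) ≤ K - γ * (t - s) := by
    intro s t hst
    have hlim : Tendsto (fun n => ∫ r in s..t, (μ (r + σ (k₁ n))).re) atTop
        (𝓝 (∫ r in s..t, (μt r).re)) := by
      refine intervalIntegral.tendsto_integral_filter_of_dominated_convergence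
        (fun _ => C) ?_ ?_ ?_ ?_
      · exact Eventually.of_forall fun n =>
          (hμsi (σ (k₁ n)) s t).def'.aestronglyMeasurable.re
      · refine Eventually.of_forall fun n => ae_of_all _ fun r _ => ?_
        exact le_trans (Complex.abs_re_le_norm _) (hμb _)
      · exact intervalIntegrable_const
      · exact ae_of_all _ fun r _ => (Complex.continuous_re.tendsto _).comp (hμ1 r)
    exact le_of_tendsto hlim (Eventually.of_forall fun n => hdecs _ s t hst)
  have hdects : ∀ c : ℝ, ∀ s t : ℝ, s ≤ t →
      (∫ r in s..t, (μt (r + c)).re) ≤ K - γ * (t - s) := by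
    intro c s t hst
    have : (∫ r in s..t, (μt (r + c)).re) = ∫ r in s + c..t + c, (μt r).re :=
      intervalIntegral.integral_comp_add_right (fun r => (μt r).re) c
    rw [this]
    have := hdect (s + c) (t + c) (by linarith)
    convert this using 2
    ring
  have hftm : AEStronglyMeasurable ft volume := by
    refine aestronglyMeasurable_of_tendsto_ae (u := atTop)
      (f := fun n (x : ℝ) => f (x + (σ ∘ k₁) (k₂ n))) ?_ (ae_of_all _ hf1)
    exact fun n => (hfc.comp (continuous_id.add continuous_const)).aestronglyMeasurable
  have hftb : ∀ s, ‖ft s‖ ≤ Cf := fun s =>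
    le_of_tendsto (hf1 s).norm (Eventually.of_forall fun n => hfb _)
  have hftsm : ∀ c : ℝ, AEStronglyMeasurable (fun s => ft (s + c)) volume := fun c =>
    hftm.comp_quasiMeasurePreserving
      (measurePreserving_add_right volume c).quasiMeasurePreserving
  refine ⟨fun t => ∫ s in Iic t, Complex.exp (∫ r in s..t, μt r) • ft s, ?_, ?_⟩
  · intro t
    have hrw : ∀ n, (∫ s in Set.Iic (t + τ n),
        Complex.exp (∫ r in s..(t + τ n), μ r) • f s)
        = ∫ s in Iic t, Complex.exp (∫ r in s..t, μ (r + τ n)) • f (s + τ n) := by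
      intro n
      rw [← integral_Iic_shift (fun s => Complex.exp (∫ r in s..(t + τ n), μ r) • f s) t (τ n)]
      refine setIntegral_congr_fun measurableSet_Iic fun s _ => ?_
      congr 1
      rw [intervalIntegral.integral_comp_add_right (fun r => μ r) (τ n)]
    have := tendsto_kernel_integral (V := V) (ν := fun n r => μ (r + τ n))
      (ν' := μt) (g := fun n s => f (s + τ n)) (g' := ft) (K := K) (Cν := C) (Cg := Cf) hγ
      (fun n => hμsi (τ n)) (fun n r => hμb _) (fun n => hdecs (τ n))
      (fun n => (hfc.comp (continuous_id.add continuous_const)).aestronglyMeasurable)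
      (fun n s => hfb _) hμ1' (fun s => hf1 s) t
    refine this.congr fun n => (hrw n).symm
  · intro t
    have hrw : ∀ n, (∫ s in Iic (t - τ n), Complex.exp (∫ r in s..(t - τ n), μt r) • ft s)
        = ∫ s in Iic t, Complex.exp (∫ r in s..t, μt (r + -τ n)) • ft (s + -τ n) := by
      intro n
      rw [show t - τ n = t + -τ n by ring,
        ← integral_Iic_shift (fun s => Complex.exp (∫ r in s..(t + -τ n), μt r) • ft s) t (-τ n)]
      refine setIntegral_congr_fun measurableSet_Iic fun s _ => ?_
      congr 1
      rw [intervalIntegral.integral_comp_add_right (fun r => μt r) (-τ n)]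
    have hμ2'' : ∀ r : ℝ, Tendsto (fun n => μt (r + -τ n)) atTop (𝓝 (μ r)) := by
      intro r
      refine (hμ2' r).congr fun n => by rw [sub_eq_add_neg]
    have hf2'' : ∀ s : ℝ, Tendsto (fun n => ft (s + -τ n)) atTop (𝓝 (f s)) := by
      intro s
      refine (hf2 s).congr fun n => by simp [sub_eq_add_neg, hτdef]
    have := tendsto_kernel_integral (V := V) (ν := fun n r => μt (r + -τ n))
      (ν' := μ) (g := fun n s => ft (s + -τ n)) (g' := f) (K := K) (Cν := C) (Cg := Cf) hγ
      (fun n => hμtsi (-τ n)) (fun n r => hμtb _) (fun n => hdects (-τ n))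
      (fun n => hftsm (-τ n)) (fun n s => hftb _) hμ2'' hf2'' t
    refine this.congr fun n => (hrw n).symm
end

lemma _root_.AlmostAutomorphic.neg' {V : Type*} [NormedAddCommGroup V] {ψ : ℝ → V}
    (h : AlmostAutomorphic ψ) : AlmostAutomorphic (fun t => -ψ t) := by
  obtain ⟨hc, h⟩ := h
  refine ⟨hc.neg, fun σ => ?_⟩
  obtain ⟨k, hk, ψt, h1, h2⟩ := h σ
  exact ⟨k, hk, fun t => -ψt t, fun t => (h1 t).neg, fun t => (h2 t).neg⟩

lemma _root_.AlmostAutomorphic.reflect {V : Type*} [NormedAddCommGroup V] {ψ : ℝ → V}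
    (h : AlmostAutomorphic ψ) : AlmostAutomorphic (fun t => ψ (-t)) := by
  obtain ⟨hc, h⟩ := h
  refine ⟨hc.comp continuous_neg, fun σ => ?_⟩
  obtain ⟨k, hk, ψt, h1, h2⟩ := h (fun n => -σ n)
  refine ⟨k, hk, fun t => ψt (-t), fun t => ?_, fun t => ?_⟩
  · refine (h1 (-t)).congr fun n => ?_
    congr 1; ring
  · refine (h2 (-t)).congr fun n => ?_
    congr 1; ring

lemma _root_.ErgodicMeanR.reflect_neg {μ : ℝ → ℂ} {m : ℝ}
    (hm : ErgodicMeanR (fun t => (μ t).re) m) :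
    ErgodicMeanR (fun t => ((-μ (-t)).re)) (-m) := by
  intro ε hε
  obtain ⟨T₁, hT₁, hT⟩ := hm ε hε
  refine ⟨T₁, hT₁, fun T hTT ξ => ?_⟩
  have h1 : (∫ s in (-T + ξ)..(T + ξ), (-μ (-s)).re)
      = -∫ s in (-T + -ξ)..(T + -ξ), (μ s).re := by
    have : (fun s => (-μ (-s)).re) = fun s => -((fun r => (μ r).re) (-s)) := by
      funext s; simp
    rw [this, intervalIntegral.integral_neg, intervalIntegral.integral_comp_neg
      (fun r => (μ r).re)]
    congr 1 <;> ring
  rw [h1]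
  have h2 := hT T hTT (-ξ)
  have h3 : ((2 * T)⁻¹ * -∫ s in (-T + -ξ)..(T + -ξ), (μ s).re) - -m
      = -(((2 * T)⁻¹ * ∫ s in (-T + -ξ)..(T + -ξ), (μ s).re) - m) := by ring
  rw [h3, abs_neg]
  exact h2

lemma reflect_integral_eq {V : Type*} [NormedAddCommGroup V] [NormedSpace ℂ V]
    (μ : ℝ → ℂ) (f : ℝ → V) (t : ℝ) :
    (∫ s in Iic (-t), Complex.exp (∫ r in s..(-t), -μ (-r)) • (-f (-s)))
    = -∫ s in Ici t, Complex.exp (∫ r in s..t, μ r) • f s := by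
  have hker : ∀ x : ℝ, (∫ r in x..(-t), -μ (-r)) = ∫ r in (-x)..t, μ r := by
    intro x
    rw [intervalIntegral.integral_neg, intervalIntegral.integral_comp_neg (fun r => μ r),
      neg_neg, ← intervalIntegral.integral_symm]
  have h1 : (∫ s in Iic (-t), Complex.exp (∫ r in s..(-t), -μ (-r)) • (-f (-s)))
      = ∫ s in Iic (-t), -((fun u => Complex.exp (∫ r in u..t, μ r) • f u) (-s)) := by
    refine setIntegral_congr_fun measurableSet_Iic fun x _ => ?_
    rw [hker x, smul_neg]
  rw [h1, MeasureTheory.integral_neg]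
  congr 1
  rw [MeasureTheory.integral_Ici_eq_integral_Ioi,
    show Ioi t = Ioi (-(-t)) by rw [neg_neg]]
  exact integral_comp_neg_Iic (-t) (fun u => Complex.exp (∫ r in u..t, μ r) • f u)

end MasseraAux

open MasseraAux Set

theorem massera_scalar_almost_automorphic
    {V : Type*} [NormedAddCommGroup V] [NormedSpace ℂ V] [CompleteSpace V]
    (μ : ℝ → ℂ) (hμc : Continuous μ) (hμb : ∃ C, ∀ t, ‖μ t‖ ≤ C)
    (hμaa : AlmostAutomorphic μ)
    (m : ℝ) (hm : ErgodicMeanR (fun t => (μ t).re) m) (hm0 : m ≠ 0)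
    (f : ℝ → V) (hfc : Continuous f) (hfb : ∃ C, ∀ t, ‖f t‖ ≤ C)
    (hfaa : AlmostAutomorphic f) :
    (m < 0 →
      (∀ t : ℝ, HasDerivAt (fun t => ∫ s in Set.Iic t, Complex.exp (∫ r in s..t, μ r) • f s)
        (μ t • (∫ s in Set.Iic t, Complex.exp (∫ r in s..t, μ r) • f s) + f t) t) ∧
      (∃ C, ∀ t : ℝ, ‖∫ s in Set.Iic t, Complex.exp (∫ r in s..t, μ r) • f s‖ ≤ C) ∧
      AlmostAutomorphic (fun t => ∫ s in Set.Iic t, Complex.exp (∫ r in s..t, μ r) • f s) ∧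
      (∀ z : ℝ → V, (∀ t : ℝ, HasDerivAt z (μ t • z t + f t) t) →
        (∃ C, ∀ t : ℝ, ‖z t‖ ≤ C) →
        z = fun t => ∫ s in Set.Iic t, Complex.exp (∫ r in s..t, μ r) • f s)) ∧
    (0 < m →
      (∀ t : ℝ, HasDerivAt (fun t => -∫ s in Set.Ici t, Complex.exp (∫ r in s..t, μ r) • f s)
        (μ t • (-∫ s in Set.Ici t, Complex.exp (∫ r in s..t, μ r) • f s) + f t) t) ∧
      (∃ C, ∀ t : ℝ, ‖-∫ s in Set.Ici t, Complex.exp (∫ r in s..t, μ r) • f s‖ ≤ C) ∧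
      AlmostAutomorphic (fun t => -∫ s in Set.Ici t, Complex.exp (∫ r in s..t, μ r) • f s) ∧
      (∀ z : ℝ → V, (∀ t : ℝ, HasDerivAt z (μ t • z t + f t) t) →
        (∃ C, ∀ t : ℝ, ‖z t‖ ≤ C) →
        z = fun t => -∫ s in Set.Ici t, Complex.exp (∫ r in s..t, μ r) • f s)) := by
  obtain ⟨C, hC⟩ := hμb
  obtain ⟨Cf, hCf⟩ := hfb
  constructor
  · -- m < 0
    intro hneg
    obtain ⟨K, γ, hK0, hγ, hdec⟩ := decay_of_ergodic hC hm hneg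
    have hμi : ∀ a b : ℝ, IntervalIntegrable μ volume a b :=
      fun a b => hμc.intervalIntegrable a b
    have hd := fun t => massera_hasDerivAt μ hμc hγ hdec f hfc hCf t
    have hbd : ∀ t : ℝ, ‖∫ s in Set.Iic t, Complex.exp (∫ r in s..t, μ r) • f s‖
        ≤ (Real.exp K * Cf) * γ⁻¹ :=
      fun t => norm_integral_kernel_le hγ hμi hdec hCf t
    have hcont : Continuous (fun t => ∫ s in Set.Iic t, Complex.exp (∫ r in s..t, μ r) • f s) :=
      continuous_iff_continuousAt.mpr fun t => (hd t).continuousAt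
    refine ⟨hd, ⟨(Real.exp K * Cf) * γ⁻¹, hbd⟩,
      massera_aa μ hμc hC hμaa hγ hdec f hfc hCf hfaa hcont, ?_⟩
    intro z hz hzb
    exact massera_unique μ hμc hγ hdec f z _ hz hd hzb ⟨(Real.exp K * Cf) * γ⁻¹, hbd⟩
  · -- 0 < m
    intro hpos
    have hνc : Continuous (fun r => -μ (-r)) := (hμc.comp continuous_neg).neg
    have hνb : ∀ r : ℝ, ‖(fun r => -μ (-r)) r‖ ≤ C := fun r => by
      simpa using hC (-r)
    have hgc : Continuous (fun s => -f (-s)) := (hfc.comp continuous_neg).neg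
    have hgb : ∀ s : ℝ, ‖(fun s => -f (-s)) s‖ ≤ Cf := fun s => by
      simpa using hCf (-s)
    have hνaa : AlmostAutomorphic (fun r => -μ (-r)) := hμaa.reflect.neg'
    have hgaa : AlmostAutomorphic (fun s => -f (-s)) := hfaa.reflect.neg'
    have herg : ErgodicMeanR (fun t => ((-μ (-t)).re)) (-m) := hm.reflect_neg
    obtain ⟨K, γ, hK0, hγ, hdec⟩ := decay_of_ergodic (μ := fun r => -μ (-r)) hνb herg
      (by linarith)
    have hνi : ∀ a b : ℝ, IntervalIntegrable (fun r => -μ (-r)) volume a b :=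
      fun a b => hνc.intervalIntegrable a b
    have hYd := fun u => massera_hasDerivAt (fun r => -μ (-r)) hνc hγ hdec
      (fun s => -f (-s)) hgc hgb u
    have hYbd : ∀ u : ℝ, ‖∫ s in Set.Iic u,
        Complex.exp (∫ r in s..u, -μ (-r)) • (-f (-s))‖ ≤ (Real.exp K * Cf) * γ⁻¹ :=
      fun u => norm_integral_kernel_le hγ hνi hdec hgb u
    have hYcont : Continuous (fun u => ∫ s in Set.Iic u,
        Complex.exp (∫ r in s..u, -μ (-r)) • (-f (-s))) :=
      continuous_iff_continuousAt.mpr fun u => (hYd u).continuousAt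
    have hYaa : AlmostAutomorphic (fun u => ∫ s in Set.Iic u,
        Complex.exp (∫ r in s..u, -μ (-r)) • (-f (-s))) :=
      massera_aa (fun r => -μ (-r)) hνc hνb hνaa hγ hdec
        (fun s => -f (-s)) hgc hgb hgaa hYcont
    -- the key reflection identity
    have key : ∀ t : ℝ, (-∫ s in Set.Ici t, Complex.exp (∫ r in s..t, μ r) • f s)
        = ∫ s in Set.Iic (-t), Complex.exp (∫ r in s..(-t), -μ (-r)) • (-f (-s)) :=
      fun t => (reflect_integral_eq μ f t).symm
    have hfun : (fun t => -∫ s in Set.Ici t, Complex.exp (∫ r in s..t, μ r) • f s)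
        = fun t => ∫ s in Set.Iic (-t), Complex.exp (∫ r in s..(-t), -μ (-r)) • (-f (-s)) :=
      funext key
    refine ⟨?_, ?_, ?_, ?_⟩
    · intro t
      rw [hfun, key t]
      have hcomp := HasDerivAt.scomp (𝕜 := ℝ) t (hYd (-t)) (hasDerivAt_neg t)
      convert hcomp using 1
      · rfl
      simp [smul_add, neg_smul]
    · refine ⟨(Real.exp K * Cf) * γ⁻¹, fun t => ?_⟩
      rw [show (-∫ s in Set.Ici t, Complex.exp (∫ r in s..t, μ r) • f s) = _ from key t]
      exact hYbd (-t)
    · rw [hfun]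
      exact hYaa.reflect
    · intro z hz hzb
      obtain ⟨Cz, hCz⟩ := hzb
      have hw : ∀ u : ℝ, HasDerivAt (fun v => z (-v))
          ((fun r => -μ (-r)) u • z (-u) + (fun s => -f (-s)) u) u := by
        intro u
        have hcomp := HasDerivAt.scomp (𝕜 := ℝ) u (hz (-u)) (hasDerivAt_neg u)
        convert hcomp using 1
        · rfl
        show (-μ (-u)) • z (-u) + (-f (-u)) = (-1 : ℝ) • (μ (-u) • z (-u) + f (-u))
        rw [smul_add, neg_one_smul, neg_one_smul, neg_smul]
      have huniq := massera_unique (fun r => -μ (-r)) hνc hγ hdec (fun s => -f (-s))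
        (fun v => z (-v)) _ hw hYd ⟨Cz, fun u => hCz (-u)⟩
        ⟨(Real.exp K * Cf) * γ⁻¹, hYbd⟩
      funext t
      rw [key t]
      have := congrFun huniq (-t)
      simpa using this
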